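/- arXiv:hep-th/9405048 — 2 statements merged into one kernel-verified Lean document; each statement's English description precedes it below -/
import Mathlib

section
/- With the same setup (ε an involution, Q anticommuting with ε, H = Q² on a finite-dimensional complex vector space), the supertrace tr(ε · exp(−βH)) is independent of β and equals dim ker(H|F₊) − dim ker(H|F₋). -/
open scoped Matrix

set_option maxHeartbeats 1000000

lemma proj_trace_aux {n : Type*} [Fintype n] [DecidableEq n]
    (ε H π : Matrix n n ℂ) (σ : ℂ) (hσ : σ * σ = 1)
    (hε : ε * ε = 1) (hεπ : ε * π = π * ε) (hππ : π * π = π)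
    (hHπ : H * π = 0) (hεH : ε * H = H * ε)
    (hker : ∀ x, H.mulVec x = 0 → π.mulVec x = x) :
    ((2:ℂ)⁻¹ • (π + σ • (ε * π))).trace =
      (Module.finrank ℂ ↥(Module.End.eigenspace (Matrix.mulVecLin ε) σ ⊓
        LinearMap.ker (Matrix.mulVecLin H)) : ℂ) := by
  set a : Matrix n n ℂ := (2:ℂ)⁻¹ • (π + σ • (ε * π)) with ha
  have hεa : ε * a = σ • a := by
    have h1 : σ • a = (2:ℂ)⁻¹ • (σ • π + ε * π) := by
      rw [ha, smul_comm, smul_add, smul_smul, hσ, one_smul]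
    rw [h1, ha, Matrix.mul_smul, mul_add, Matrix.mul_smul, ← mul_assoc, hε, one_mul,
      add_comm (ε * π)]
  have hHa : H * a = 0 := by
    rw [ha, Matrix.mul_smul, mul_add, Matrix.mul_smul, ← mul_assoc, ← hεH, mul_assoc, hHπ]
    simp
  have haπ : a * a = a := by
    have hπa : π * a = a := by
      rw [ha, Matrix.mul_smul, mul_add, Matrix.mul_smul, ← mul_assoc, ← hεπ, mul_assoc, hππ]
    calc a * a = (2:ℂ)⁻¹ • (π * a + σ • (ε * (π * a))) := by
          rw [ha, Matrix.smul_mul, add_mul, Matrix.smul_mul, mul_assoc]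
      _ = (2:ℂ)⁻¹ • (a + σ • (σ • a)) := by rw [hπa, hεa]
      _ = a := by rw [smul_smul, hσ, one_smul, ← two_smul ℂ a, smul_smul]; norm_num
  have hproj : LinearMap.IsProj (Module.End.eigenspace (Matrix.mulVecLin ε) σ ⊓
      LinearMap.ker (Matrix.mulVecLin H)) (Matrix.mulVecLin a) := by
    constructor
    · intro x
      rw [Submodule.mem_inf]
      constructor
      · rw [Module.End.mem_eigenspace_iff]
        simp only [Matrix.mulVecLin_apply, Matrix.mulVec_mulVec, hεa, Matrix.smul_mulVec]
      · rw [LinearMap.mem_ker]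
        simp only [Matrix.mulVecLin_apply, Matrix.mulVec_mulVec, hHa, Matrix.zero_mulVec]
    · intro x hx
      rw [Submodule.mem_inf, Module.End.mem_eigenspace_iff, LinearMap.mem_ker] at hx
      obtain ⟨h1, h2⟩ := hx
      simp only [Matrix.mulVecLin_apply] at h1 h2 ⊢
      have hπx : π *ᵥ x = x := hker x h2
      rw [ha, Matrix.smul_mulVec, Matrix.add_mulVec, Matrix.smul_mulVec,
        ← Matrix.mulVec_mulVec, hπx, h1, smul_smul, hσ, one_smul, ← two_smul ℂ x, smul_smul]
      norm_num
  have htr := hproj.trace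
  have hmat : LinearMap.trace ℂ (n → ℂ) (Matrix.mulVecLin a) = a.trace := by
    rw [LinearMap.trace_eq_matrix_trace ℂ (Pi.basisFun ℂ n), LinearMap.toMatrix_eq_toMatrix',
      ← Matrix.toLin'_apply', LinearMap.toMatrix'_toLin']
  rw [← hmat, htr]

/-- The supertrace `tr(ε · exp(−βH))` is independent of `β` (it equals the same value for
every real `β`) and equals `dim ker(H|F₊) − dim ker(H|F₋)`, where `F±` are the
`±1`-eigenspaces of the grading involution `ε`, `Q` anticommutes with `ε`, `H = Q²` is
diagonalizable with nonnegative real eigenvalues. -/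
theorem stmt3 {n : Type*} [Fintype n] [DecidableEq n]
    (ε Q H : Matrix n n ℂ) (hε : ε * ε = 1) (hanti : Q * ε = -(ε * Q))
    (hH : H = Q * Q)
    (hdiag : ∃ (P : Matrix n n ℂ) (d : n → ℝ), IsUnit P.det ∧ (∀ i, 0 ≤ d i) ∧
      H = P * Matrix.diagonal (fun i => (d i : ℂ)) * P⁻¹) :
    ∀ β : ℝ, (ε * NormedSpace.exp ((-β : ℂ) • H)).trace =
      (((Module.finrank ℂ
            ↥(Module.End.eigenspace (Matrix.mulVecLin ε) 1 ⊓ LinearMap.ker (Matrix.mulVecLin H)) : ℤ)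
        - (Module.finrank ℂ
            ↥(Module.End.eigenspace (Matrix.mulVecLin ε) (-1) ⊓ LinearMap.ker (Matrix.mulVecLin H)) : ℤ) : ℤ) : ℂ) := by
  obtain ⟨P, d, hP, hd0, hHP⟩ := hdiag
  intro β
  have hP1 : P * P⁻¹ = 1 := Matrix.mul_nonsing_inv P hP
  have hP2 : P⁻¹ * P = 1 := Matrix.nonsing_inv_mul P hP
  obtain ⟨M, hM⟩ : ∃ M : Matrix n n ℂ, M = P⁻¹ * ε * P := ⟨_, rfl⟩
  obtain ⟨N, hN⟩ : ∃ N : Matrix n n ℂ, N = P⁻¹ * Q * P := ⟨_, rfl⟩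
  have cancel1 : ∀ X : Matrix n n ℂ, P * (P⁻¹ * X) = X := fun X => by
    rw [← mul_assoc, hP1, one_mul]
  have cancel2 : ∀ X : Matrix n n ℂ, P⁻¹ * (P * X) = X := fun X => by
    rw [← mul_assoc, hP2, one_mul]
  have conj : ∀ A B : Matrix n n ℂ, (P⁻¹ * A * P) * (P⁻¹ * B * P) = P⁻¹ * (A * B) * P := by
    intro A B; simp only [mul_assoc, cancel1]
  have conjP : ∀ A B : Matrix n n ℂ, (P * A * P⁻¹) * (P * B * P⁻¹) = P * (A * B) * P⁻¹ := by
    intro A B; simp only [mul_assoc, cancel2]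
  have hεQ : ε * Q = -(Q * ε) := by rw [hanti, neg_neg]
  have hεH : ε * H = H * ε := by
    rw [hH, ← mul_assoc, hεQ, neg_mul, mul_assoc, hεQ, mul_neg, neg_neg, ← mul_assoc]
  have hDdef : P⁻¹ * H * P = Matrix.diagonal (fun i => (d i : ℂ)) := by
    rw [hHP]; simp only [mul_assoc, cancel2, hP2, mul_one]
  have hMD : M * Matrix.diagonal (fun i => (d i : ℂ))
      = Matrix.diagonal (fun i => (d i : ℂ)) * M := by
    rw [hM, ← hDdef, conj, conj, hεH]
  have hND : N * N = Matrix.diagonal (fun i => (d i : ℂ)) := by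
    rw [hN, conj, ← hH, hDdef]
  have hNDc : N * Matrix.diagonal (fun i => (d i : ℂ))
      = Matrix.diagonal (fun i => (d i : ℂ)) * N := by
    rw [← hND, ← mul_assoc]
  -- key fact: anything commuting with D commutes with any diagonal function of d
  have key : ∀ A : Matrix n n ℂ,
      A * Matrix.diagonal (fun i => (d i : ℂ)) = Matrix.diagonal (fun i => (d i : ℂ)) * A →
      ∀ e : ℝ → ℂ,
      A * Matrix.diagonal (fun i => e (d i)) = Matrix.diagonal (fun i => e (d i)) * A := by
    intro A hA e
    ext i j
    rw [Matrix.mul_diagonal, Matrix.diagonal_mul]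
    rcases eq_or_ne (d i) (d j) with h | h
    · rw [h, mul_comm]
    · have h1 : (A * Matrix.diagonal (fun i => (d i : ℂ))) i j
          = (Matrix.diagonal (fun i => (d i : ℂ)) * A) i j := by rw [hA]
      rw [Matrix.mul_diagonal, Matrix.diagonal_mul] at h1
      have h2 : A i j * ((d j : ℂ) - (d i : ℂ)) = 0 := by linear_combination h1
      rcases mul_eq_zero.mp h2 with h3 | h3
      · simp [h3]
      · have h4 : (d j : ℂ) = (d i : ℂ) := sub_eq_zero.mp h3
        have h5 : d j = d i := by exact_mod_cast h4
        exact absurd h5.symm h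
  have traceME : ∀ (A : Matrix n n ℂ) (f : n → ℂ),
      (A * Matrix.diagonal f).trace = ∑ i, A i i * f i := by
    intro A f
    simp [Matrix.trace, Matrix.diag, Matrix.mul_diagonal]
  -- Claim A : supertraces over nonzero eigenvalue blocks vanish
  have claimA : ∀ lam : ℝ, lam ≠ 0 →
      ∑ i ∈ Finset.univ.filter (fun i => d i = lam), M i i = 0 := by
    intro lam hlam
    have hNE : N * Matrix.diagonal (fun i => if d i = lam then (1:ℂ) else 0)
        = Matrix.diagonal (fun i => if d i = lam then (1:ℂ) else 0) * N :=
      key N hNDc (fun x => if x = lam then (1:ℂ) else 0)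
    have hDE : Matrix.diagonal (fun i => (d i : ℂ))
          * Matrix.diagonal (fun i => if d i = lam then (1:ℂ) else 0)
        = (lam : ℂ) • Matrix.diagonal (fun i => if d i = lam then (1:ℂ) else 0) := by
      ext i j
      rcases eq_or_ne i j with rfl | hij
      · simp only [Matrix.diagonal_mul_diagonal, Matrix.diagonal_apply_eq, Matrix.smul_apply,
          smul_eq_mul]
        rcases eq_or_ne (d i) lam with h | h <;> simp [h]
      · simp [Matrix.diagonal_mul_diagonal, Matrix.diagonal_apply_ne _ hij]
    set E : Matrix n n ℂ := Matrix.diagonal (fun i => if d i = lam then (1:ℂ) else 0) with hE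
    set D : Matrix n n ℂ := Matrix.diagonal (fun i => (d i : ℂ)) with hD
    have e1 : M * (D * E) = -(N * (M * (N * E))) := by
      have hMN : M * N = -(N * M) := by
        rw [hM, hN, conj, conj, hεQ, mul_neg, neg_mul]
      rw [← hND]
      simp only [← mul_assoc]
      rw [hMN]
      simp [Matrix.neg_mul]
    have e2 : (N * (M * (N * E))).trace = (M * (D * E)).trace := by
      rw [Matrix.trace_mul_comm N (M * (N * E))]
      simp only [mul_assoc]
      rw [← hNE, ← mul_assoc N N E, hND]
    have h0 : (M * (D * E)).trace = 0 := by
      have h1 : (M * (D * E)).trace = -((M * (D * E)).trace) := by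
        conv_lhs => rw [e1]
        rw [Matrix.trace_neg, e2]
      linear_combination h1 / 2
    rw [hDE, Matrix.mul_smul, Matrix.trace_smul] at h0
    have hlam' : (lam : ℂ) ≠ 0 := by exact_mod_cast hlam
    have hME : (M * E).trace = 0 := by
      rcases smul_eq_zero.mp h0 with h | h
      · exact absurd h hlam'
      · exact h
    rw [hE, traceME] at hME
    rw [← hME, Finset.sum_filter]
    apply Finset.sum_congr rfl
    intro i _
    rcases eq_or_ne (d i) lam with h | h <;> simp [h]
  -- the zero-eigenvalue block
  obtain ⟨E0, hE0⟩ : ∃ E0 : Matrix n n ℂ,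
    E0 = Matrix.diagonal (fun i => if d i = (0:ℝ) then (1:ℂ) else 0) := ⟨_, rfl⟩
  obtain ⟨π, hπ⟩ : ∃ π : Matrix n n ℂ, π = P * E0 * P⁻¹ := ⟨_, rfl⟩
  have hME0 : M * E0 = E0 * M := by
    rw [hE0]; exact key M hMD (fun x => if x = (0:ℝ) then (1:ℂ) else 0)
  have hεP : ε = P * M * P⁻¹ := by
    rw [hM]; simp only [mul_assoc, cancel1, hP1, mul_one]
  have hεπ : ε * π = π * ε := by
    rw [hεP, hπ, conjP, conjP, hME0]
  have hE00 : E0 * E0 = E0 := by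
    rw [hE0]
    ext i j
    rcases eq_or_ne i j with rfl | hij
    · simp only [Matrix.diagonal_mul_diagonal, Matrix.diagonal_apply_eq]
      rcases eq_or_ne (d i) (0:ℝ) with h | h <;> simp [h]
    · simp [Matrix.diagonal_mul_diagonal, Matrix.diagonal_apply_ne _ hij]
  have hππ : π * π = π := by
    rw [hπ, conjP, hE00]
  have hDE0 : Matrix.diagonal (fun i => (d i : ℂ)) * E0 = 0 := by
    rw [hE0, Matrix.diagonal_mul_diagonal]
    have h : (fun i => (d i : ℂ) * (if d i = (0:ℝ) then (1:ℂ) else 0)) = fun _ => (0:ℂ) := by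
      funext i
      rcases eq_or_ne (d i) (0:ℝ) with h | h <;> simp [h]
    rw [h]
    simp
  have hHπ : H * π = 0 := by
    rw [hHP, hπ, conjP, hDE0, mul_zero, zero_mul]
  have hker : ∀ x, H.mulVec x = 0 → π.mulVec x = x := by
    intro x hx
    have h1 : (P * Matrix.diagonal (fun i => (d i : ℂ)) * P⁻¹).mulVec x = 0 := by
      rw [← hHP]; exact hx
    have h2 := congrArg (fun v => P⁻¹.mulVec v) h1
    simp only [Matrix.mulVec_mulVec, Matrix.mulVec_zero] at h2
    have h3 : (Matrix.diagonal (fun i => (d i : ℂ)) * P⁻¹).mulVec x = 0 := by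
      rw [show Matrix.diagonal (fun i => (d i : ℂ)) * P⁻¹
          = P⁻¹ * (P * Matrix.diagonal (fun i => (d i : ℂ)) * P⁻¹) from by
        simp only [← mul_assoc, hP2, one_mul]]
      exact h2
    have h4 : ∀ i, (d i : ℂ) * P⁻¹.mulVec x i = 0 := by
      intro i
      have h5 := congrFun h3 i
      rw [← Matrix.mulVec_mulVec] at h5
      rwa [Matrix.mulVec_diagonal] at h5
    have h5 : E0.mulVec (P⁻¹.mulVec x) = P⁻¹.mulVec x := by
      funext i
      rw [hE0, Matrix.mulVec_diagonal]
      rcases eq_or_ne (d i) (0:ℝ) with h | h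
      · simp [h]
      · have hd : (d i : ℂ) ≠ 0 := by exact_mod_cast h
        have hyi : P⁻¹.mulVec x i = 0 := by
          rcases mul_eq_zero.mp (h4 i) with hc | hc
          · exact absurd hc hd
          · exact hc
        simp [h, hyi]
    rw [hπ, ← Matrix.mulVec_mulVec, ← Matrix.mulVec_mulVec, h5, Matrix.mulVec_mulVec, hP1,
      Matrix.one_mulVec]
  -- cyclic trace helper
  have cyc : ∀ W : Matrix n n ℂ, (ε * (P * W * P⁻¹)).trace = (M * W).trace := by
    intro W
    calc (ε * (P * W * P⁻¹)).trace = ((ε * P * W) * P⁻¹).trace := by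
          simp only [mul_assoc]
      _ = (P⁻¹ * (ε * P * W)).trace := Matrix.trace_mul_comm _ _
      _ = (M * W).trace := by rw [hM]; simp only [mul_assoc]
  -- the two projections
  have t1 := proj_trace_aux ε H π 1 (by norm_num) hε hεπ hππ hHπ hεH hker
  have t2 := proj_trace_aux ε H π (-1) (by norm_num) hε hεπ hππ hHπ hεH hker
  have hsplit : (ε * π).trace =
      ((2:ℂ)⁻¹ • (π + (1:ℂ) • (ε * π))).trace - ((2:ℂ)⁻¹ • (π + (-1:ℂ) • (ε * π))).trace := by
    rw [← Matrix.trace_sub]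
    congr 1
    ext i j
    simp only [Matrix.sub_apply, Matrix.smul_apply, Matrix.add_apply, smul_eq_mul, one_smul,
      neg_smul, Matrix.neg_apply]
    ring
  -- compute the exponential
  have hsm : ((-β : ℂ)) • H = P * Matrix.diagonal (fun i => (-β : ℂ) * (d i : ℂ)) * P⁻¹ := by
    have hdiagsm : Matrix.diagonal (fun i => (-β : ℂ) * (d i : ℂ))
        = (-β : ℂ) • Matrix.diagonal (fun i => ((d i) : ℂ)) := by
      ext i j
      rcases eq_or_ne i j with rfl | hij
      · simp
      · simp [Matrix.diagonal_apply_ne _ hij]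
    rw [hHP, hdiagsm, ← Matrix.smul_mul, ← Matrix.mul_smul]
  have hexp : NormedSpace.exp ((-β : ℂ) • H) =
      P * Matrix.diagonal (fun i => Complex.exp ((-β : ℂ) * (d i : ℂ))) * P⁻¹ := by
    rw [hsm, Matrix.exp_conj P (Matrix.diagonal fun i => (-β : ℂ) * (d i : ℂ))
      ((Matrix.isUnit_iff_isUnit_det P).mpr hP), Matrix.exp_diagonal]
    congr 2
    funext i
    rw [Pi.exp_def]
    simp only [← Complex.exp_eq_exp_ℂ]
  rw [hexp, cyc, traceME]
  -- split the sum
  have hsum : ∑ i, M i i * Complex.exp ((-β : ℂ) * (d i : ℂ))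
      = ∑ i ∈ Finset.univ.filter (fun i => d i = 0), M i i := by
    rw [← Finset.sum_filter_add_sum_filter_not Finset.univ (fun i => d i = 0)]
    have hA : ∑ i ∈ Finset.univ.filter (fun i => d i = 0),
          M i i * Complex.exp ((-β : ℂ) * (d i : ℂ))
        = ∑ i ∈ Finset.univ.filter (fun i => d i = 0), M i i := by
      apply Finset.sum_congr rfl
      intro i hi
      have h : d i = 0 := by simpa using (Finset.mem_filter.mp hi).2
      simp [h]
    have hB : ∑ i ∈ Finset.univ.filter (fun i => ¬ d i = 0),
        M i i * Complex.exp ((-β : ℂ) * (d i : ℂ)) = 0 := by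
      rw [← Finset.sum_fiberwise_of_maps_to
        (t := (Finset.univ.filter (fun i => ¬ d i = 0)).image d)
        (fun i hi => Finset.mem_image_of_mem d hi)]
      apply Finset.sum_eq_zero
      intro lam hlam
      have hlam0 : lam ≠ 0 := by
        obtain ⟨i, hi, rfl⟩ := Finset.mem_image.mp hlam
        simpa using (Finset.mem_filter.mp hi).2
      have hset : (Finset.univ.filter (fun i => ¬ d i = 0)).filter (fun i => d i = lam)
          = Finset.univ.filter (fun i => d i = lam) := by
        ext i
        simp only [Finset.mem_filter, Finset.mem_univ, true_and]
        constructor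
        · rintro ⟨_, h⟩; exact h
        · intro h; exact ⟨h ▸ hlam0, h⟩
      calc ∑ i ∈ (Finset.univ.filter (fun i => ¬ d i = 0)).filter (fun i => d i = lam),
            M i i * Complex.exp ((-β : ℂ) * (d i : ℂ))
          = ∑ i ∈ (Finset.univ.filter (fun i => ¬ d i = 0)).filter (fun i => d i = lam),
            M i i * Complex.exp ((-β : ℂ) * (lam : ℂ)) := by
            apply Finset.sum_congr rfl
            intro i hi
            have h : d i = lam := by simpa using (Finset.mem_filter.mp hi).2
            rw [h]
        _ = (∑ i ∈ (Finset.univ.filter (fun i => ¬ d i = 0)).filter (fun i => d i = lam),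
            M i i) * Complex.exp ((-β : ℂ) * (lam : ℂ)) := by rw [Finset.sum_mul]
        _ = 0 := by rw [hset, claimA lam hlam0, zero_mul]
    rw [hA, hB, add_zero]
  rw [hsum]
  -- identify the remaining sum with the supertrace of the kernel projection
  have hfinal : ∑ i ∈ Finset.univ.filter (fun i => d i = 0), M i i = (M * E0).trace := by
    rw [hE0, traceME, Finset.sum_filter]
    apply Finset.sum_congr rfl
    intro i _
    rcases eq_or_ne (d i) (0:ℝ) with h | h <;> simp [h]
  have hεπtr : (ε * π).trace = (M * E0).trace := by rw [hπ]; exact cyc E0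
  rw [hfinal, ← hεπtr, hsplit, t1, t2]
  push_cast
  ring
end

section
/- Let D : H₊ → H₋ be a linear map of finite-dimensional complex inner product spaces with adjoint D†, and set Δ₊ = D†D, Δ₋ = DD†. Then for every β > 0, tr(exp(−βΔ₊)) − tr(exp(−βΔ₋)) = dim ker D − dim ker D†; in particular the left-hand side is independent of β and equals the index of D. -/
open scoped Matrix
open Nat

section Aux

attribute [local instance] Matrix.linftyOpNormedAddCommGroup Matrix.linftyOpNormedRing
  Matrix.linftyOpNormedAlgebra

/-- Trace of the matrix exponential as a series. -/
lemma trace_exp_tsum {k : ℕ} (A : Matrix (Fin k) (Fin k) ℂ) :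
    (NormedSpace.exp A).trace = ∑' j : ℕ, (j !⁻¹ : ℂ) • (A ^ j).trace := by
  have hs : Summable (fun j : ℕ => (j !⁻¹ : ℂ) • A ^ j) :=
    NormedSpace.expSeries_summable' A
  let T : Matrix (Fin k) (Fin k) ℂ →L[ℂ] ℂ :=
    LinearMap.toContinuousLinearMap (Matrix.traceLinearMap (Fin k) ℂ ℂ)
  have := T.map_tsum hs
  simpa [T, NormedSpace.exp_eq_tsum (𝕂 := ℂ)] using this

lemma summable_trace_exp {k : ℕ} (A : Matrix (Fin k) (Fin k) ℂ) :
    Summable (fun j : ℕ => (j !⁻¹ : ℂ) • (A ^ j).trace) := by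
  have hs : Summable (fun j : ℕ => (j !⁻¹ : ℂ) • A ^ j) :=
    NormedSpace.expSeries_summable' A
  let T : Matrix (Fin k) (Fin k) ℂ →L[ℂ] ℂ :=
    LinearMap.toContinuousLinearMap (Matrix.traceLinearMap (Fin k) ℂ ℂ)
  have := hs.map T.toLinearMap.toAddMonoidHom T.continuous
  simpa [T, Function.comp_def, smul_eq_mul] using this

end Aux

/-- key cyclicity lemma -/
lemma trace_pow_cyclic {n m : ℕ} (D : Matrix (Fin m) (Fin n) ℂ) (j : ℕ) (hj : j ≠ 0) :
    ((Dᴴ * D) ^ j).trace = ((D * Dᴴ) ^ j).trace := by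
  have key : ∀ i : ℕ, (Dᴴ * D) ^ i * Dᴴ = Dᴴ * (D * Dᴴ) ^ i := by
    intro i
    induction i with
    | zero => simp
    | succ i ih =>
      calc (Dᴴ * D) ^ (i + 1) * Dᴴ = (Dᴴ * D) ^ i * Dᴴ * (D * Dᴴ) := by
            rw [pow_succ]; simp only [Matrix.mul_assoc]
        _ = Dᴴ * (D * Dᴴ) ^ i * (D * Dᴴ) := by rw [ih]
        _ = Dᴴ * (D * Dᴴ) ^ (i + 1) := by rw [pow_succ]; simp only [Matrix.mul_assoc]
  obtain ⟨i, rfl⟩ := Nat.exists_eq_succ_of_ne_zero hj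
  calc ((Dᴴ * D) ^ (i + 1)).trace = ((Dᴴ * D) ^ i * Dᴴ * D).trace := by
        rw [pow_succ]; simp only [Matrix.mul_assoc]
    _ = (D * ((Dᴴ * D) ^ i * Dᴴ)).trace := Matrix.trace_mul_comm _ _
    _ = ((D * Dᴴ) ^ (i + 1)).trace := by rw [key, _root_.pow_succ']; simp only [Matrix.mul_assoc]

/-- McKean–Singer: for a linear map `D` between finite-dimensional complex inner product
spaces (here `ℂⁿ → ℂᵐ` with adjoint `Dᴴ`), with `Δ₊ = D†D` and `Δ₋ = DD†`, for every
`β > 0` one has `tr exp(−βΔ₊) − tr exp(−βΔ₋) = dim ker D − dim ker D†`; in particular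
the left-hand side is independent of `β` and equals the index of `D`. -/
theorem stmt17 {n m : ℕ} (D : Matrix (Fin m) (Fin n) ℂ) (β : ℝ) (hβ : 0 < β) :
    (NormedSpace.exp ((-β : ℂ) • (Dᴴ * D))).trace
      - (NormedSpace.exp ((-β : ℂ) • (D * Dᴴ))).trace
      = (((Module.finrank ℂ ↥(LinearMap.ker D.mulVecLin) : ℤ)
          - (Module.finrank ℂ ↥(LinearMap.ker Dᴴ.mulVecLin) : ℤ) : ℤ) : ℂ) := by
  -- LHS = n - m
  have hL : (NormedSpace.exp ((-β : ℂ) • (Dᴴ * D))).trace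
      - (NormedSpace.exp ((-β : ℂ) • (D * Dᴴ))).trace = (n : ℂ) - m := by
    rw [trace_exp_tsum, trace_exp_tsum,
      ← Summable.tsum_sub (summable_trace_exp ((-β : ℂ) • (Dᴴ * D)))
        (summable_trace_exp ((-β : ℂ) • (D * Dᴴ)))]
    rw [tsum_eq_single 0 ?_]
    · simp [Matrix.trace_one]
    · intro j hj
      have : (((-β : ℂ) • (Dᴴ * D)) ^ j).trace = (((-β : ℂ) • (D * Dᴴ)) ^ j).trace := by
        rw [smul_pow, smul_pow, Matrix.trace_smul, Matrix.trace_smul,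
          trace_pow_cyclic D j hj]
      rw [this, sub_self]
  -- RHS = n - m
  have h1 : D.rank + Module.finrank ℂ ↥(LinearMap.ker D.mulVecLin) = n := by
    simpa [Matrix.rank] using LinearMap.finrank_range_add_finrank_ker D.mulVecLin
  have h2 : Dᴴ.rank + Module.finrank ℂ ↥(LinearMap.ker Dᴴ.mulVecLin) = m := by
    simpa [Matrix.rank] using LinearMap.finrank_range_add_finrank_ker Dᴴ.mulVecLin
  have h3 : Dᴴ.rank = D.rank := by
    open scoped ComplexOrder in exact Matrix.rank_conjTranspose D
  have hR : ((Module.finrank ℂ ↥(LinearMap.ker D.mulVecLin) : ℤ)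
      - (Module.finrank ℂ ↥(LinearMap.ker Dᴴ.mulVecLin) : ℤ)) = (n : ℤ) - m := by
    omega
  rw [hL, hR]
  push_cast
  ring
end
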